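/- arXiv:1408.0253 — 2 statements merged into one kernel-verified Lean document; each statement's English description precedes it below -/
import Mathlib

section
/- In SU(n), the conjugacy class of exp(ζ*), where ζ* = diag((n−1)/(2n), (n−3)/(2n), …, (1−n)/(2n))·2πi in the Lie algebra (i.e., the unitary matrix with eigenvalues the n distinct n-th roots of (−1)^{n+1}), is invariant under multiplication by every element of the centre Z(SU(n)); moreover it is the unique conjugacy class of SU(n) with this property. -/
/- STATEMENT 10: In SU(n), the conjugacy class of any A whose eigenvalues are the n distinct
n-th roots of (−1)^{n+1} (i.e. every solution of z^n = (−1)^{n+1} is in the spectrum of A) is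
invariant under multiplication by every element of the centre Z(SU(n)), and it is the unique
conjugacy class of SU(n) with this property. -/
open Matrix Polynomial
open scoped ComplexOrder

namespace Stmt10
variable {n : ℕ}

lemma eval_charpoly (M : Matrix (Fin n) (Fin n) ℂ) (z : ℂ) :
    M.charpoly.eval z = (z • (1 : Matrix (Fin n) (Fin n) ℂ) - M).det := by
  rw [Matrix.charpoly, ← coe_evalRingHom, RingHom.map_det]
  congr 1
  ext i j
  by_cases h : i = j <;>
    simp [h, charmatrix_apply, Matrix.one_apply, Matrix.diagonal_apply, Matrix.sub_apply]

lemma mem_spectrum_iff_eval (M : Matrix (Fin n) (Fin n) ℂ) (z : ℂ) :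
    z ∈ spectrum ℂ M ↔ M.charpoly.eval z = 0 := by
  rw [spectrum.mem_iff, Algebra.algebraMap_eq_smul_one, eval_charpoly,
    Matrix.isUnit_iff_isUnit_det, isUnit_iff_ne_zero, not_ne_iff]

lemma exists_root_family (hn : 0 < n) {c' : ℂ} (hc' : c' ≠ 0) :
    ∃ d : Fin n → ℂ, Function.Injective d ∧ ∀ i, d i ^ n = c' := by
  obtain ⟨ζ, hζ⟩ := IsAlgClosed.exists_pow_nat_eq c' hn
  have hζ0 : ζ ≠ 0 := by rintro rfl; rw [zero_pow hn.ne'] at hζ; exact hc' hζ.symm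
  have hω := Complex.isPrimitiveRoot_exp n hn.ne'
  refine ⟨fun i => Complex.exp (2 * Real.pi * Complex.I / n) ^ (i : ℕ) * ζ, ?_, ?_⟩
  · intro i j hij
    have := mul_right_cancel₀ hζ0 hij
    exact Fin.ext (hω.pow_inj i.isLt j.isLt this)
  · intro i
    rw [mul_pow, ← pow_mul, mul_comm (i : ℕ) n, pow_mul, hω.pow_eq_one, one_pow, one_mul, hζ]

lemma charpoly_eq (hn : 0 < n) {c' : ℂ} (hc' : c' ≠ 0) (M : Matrix (Fin n) (Fin n) ℂ)
    (h : ∀ z : ℂ, z ^ n = c' → z ∈ spectrum ℂ M) :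
    M.charpoly = X ^ n - C c' := by
  obtain ⟨d, hdinj, hd⟩ := exists_root_family hn hc'
  set q : ℂ[X] := X ^ n - C c' with hq
  have hqmonic : q.Monic := monic_X_pow_sub_C _ hn.ne'
  have hqdeg : q.natDegree = n := natDegree_X_pow_sub_C
  have hpmonic : M.charpoly.Monic := M.charpoly_monic
  have hpdeg : M.charpoly.natDegree = n := M.charpoly_natDegree_eq_dim.trans (by simp)
  by_contra hne
  set r : ℂ[X] := M.charpoly - q with hr
  have hr0 : r ≠ 0 := sub_ne_zero.mpr hne
  have hdegr : r.natDegree < n := by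
    have h1 : r.degree < M.charpoly.degree := by
      apply degree_sub_lt
      · rw [degree_eq_natDegree hpmonic.ne_zero, degree_eq_natDegree hqmonic.ne_zero, hpdeg, hqdeg]
      · exact hpmonic.ne_zero
      · rw [hpmonic.leadingCoeff, hqmonic.leadingCoeff]
    have h2 := (natDegree_lt_natDegree_iff hr0).mpr h1
    omega
  have hroots : ∀ i : Fin n, r.IsRoot (d i) := by
    intro i
    have h1 : M.charpoly.eval (d i) = 0 := (mem_spectrum_iff_eval M _).mp (h _ (hd i))
    have h2 : q.eval (d i) = 0 := by simp [hq, hd i]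
    simp [hr, Polynomial.IsRoot, h1, h2]
  have hsub : (Finset.univ.image d) ⊆ r.roots.toFinset := by
    intro z hz
    obtain ⟨i, _, rfl⟩ := Finset.mem_image.mp hz
    rw [Multiset.mem_toFinset, mem_roots hr0]
    exact hroots i
  have hcard : n ≤ r.roots.toFinset.card := by
    calc n = (Finset.univ.image d).card := by
            rw [Finset.card_image_of_injective _ hdinj, Finset.card_univ, Fintype.card_fin]
      _ ≤ _ := Finset.card_le_card hsub
  have := (Multiset.toFinset_card_le r.roots).trans r.card_roots'
  omega


variable {n : ℕ}

lemma eigvec {M : Matrix (Fin n) (Fin n) ℂ} {z : ℂ} (h : z ∈ spectrum ℂ M) :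
    ∃ v : Fin n → ℂ, v ≠ 0 ∧ M.mulVec v = z • v := by
  rw [spectrum.mem_iff, Algebra.algebraMap_eq_smul_one] at h
  have hdet : (z • (1 : Matrix (Fin n) (Fin n) ℂ) - M).det = 0 := by
    by_contra hd
    exact h ((Matrix.isUnit_iff_isUnit_det _).mpr (isUnit_iff_ne_zero.mpr hd))
  obtain ⟨v, hv0, hv⟩ := (Matrix.exists_mulVec_eq_zero_iff).mpr hdet
  refine ⟨v, hv0, ?_⟩
  rw [Matrix.sub_mulVec, Matrix.smul_mulVec, Matrix.one_mulVec, sub_eq_zero] at hv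
  exact hv.symm

lemma diag_lemma (hn : 0 < n) (M : Matrix (Fin n) (Fin n) ℂ) (d : Fin n → ℂ)
    (hdinj : Function.Injective d) (hspec : ∀ i, d i ∈ spectrum ℂ M) :
    ∃ P : Matrix (Fin n) (Fin n) ℂ, IsUnit P.det ∧ M * P = P * Matrix.diagonal d := by
  haveI : Nonempty (Fin n) := ⟨⟨0, hn⟩⟩
  choose v hv0 hv using fun i => eigvec (hspec i)
  have hli : LinearIndependent ℂ v := by
    apply Module.End.eigenvectors_linearIndependent' (Matrix.mulVecLin M) d hdinj
    intro i
    refine ⟨Module.End.mem_eigenspace_iff.mpr ?_, hv0 i⟩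
    simpa [Matrix.mulVecLin_apply] using hv i
  have hcard : Fintype.card (Fin n) = Module.finrank ℂ (Fin n → ℂ) := by
    simp [Module.finrank_fintype_fun_eq_card]
  let b' : Module.Basis (Fin n) ℂ (Fin n → ℂ) := basisOfLinearIndependentOfCardEqFinrank hli hcard
  have hb' : ⇑b' = v := coe_basisOfLinearIndependentOfCardEqFinrank hli hcard
  let P : Matrix (Fin n) (Fin n) ℂ := (Pi.basisFun ℂ (Fin n)).toMatrix ⇑b'
  have : Invertible P := (Pi.basisFun ℂ (Fin n)).invertibleToMatrix b'
  refine ⟨P, (isUnit_of_invertible P).map (Matrix.detMonoidHom), ?_⟩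
  have hP : ∀ i j, P i j = v j i := by
    intro i j
    simp [P, Module.Basis.toMatrix_apply, hb']
  ext i j
  rw [Matrix.mul_apply, Matrix.mul_diagonal, hP]
  have := congrFun (hv j) i
  rw [Matrix.mulVec, dotProduct] at this
  simp only [Pi.smul_apply, smul_eq_mul] at this
  calc ∑ k, M i k * P k j = ∑ k, M i k * v j k := by simp_rw [hP]
    _ = d j * v j i := this
    _ = v j i * d j := mul_comm _ _

variable {n : ℕ}

open scoped MatrixOrder in
lemma polar_conj {M N S : Matrix (Fin n) (Fin n) ℂ}
    (hM : M ∈ Matrix.unitaryGroup (Fin n) ℂ) (hN : N ∈ Matrix.unitaryGroup (Fin n) ℂ)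
    (hS : IsUnit S.det) (h : S * M = N * S) :
    ∃ W ∈ Matrix.unitaryGroup (Fin n) ℂ, W * M = N * W := by
  have hMM : M * Mᴴ = 1 := by simpa [Matrix.star_eq_conjTranspose] using hM.2
  have hMM' : Mᴴ * M = 1 := by simpa [Matrix.star_eq_conjTranspose] using hM.1
  have hNN : N * Nᴴ = 1 := by simpa [Matrix.star_eq_conjTranspose] using hN.2
  have hNN' : Nᴴ * N = 1 := by simpa [Matrix.star_eq_conjTranspose] using hN.1
  set T : Matrix (Fin n) (Fin n) ℂ := Sᴴ * S with hT
  have hTps : T.PosSemidef := Matrix.posSemidef_conjTranspose_mul_self S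
  set P : Matrix (Fin n) (Fin n) ℂ := CFC.sqrt T with hPdef
  have hPps : P.PosSemidef := Matrix.nonneg_iff_posSemidef.mp (CFC.sqrt_nonneg T)
  have hPH : Pᴴ = P := hPps.1
  have hPP : P * P = T := CFC.sqrt_mul_sqrt_self T hTps.nonneg
  have h2 : Mᴴ * Sᴴ = Sᴴ * Nᴴ := by
    calc Mᴴ * Sᴴ = (S * M)ᴴ := by rw [Matrix.conjTranspose_mul]
      _ = (N * S)ᴴ := by rw [h]
      _ = Sᴴ * Nᴴ := by rw [Matrix.conjTranspose_mul]
  have h3 : Sᴴ * N = M * Sᴴ := by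
    have h4 := congrArg (fun X => M * X * N) h2
    simp only [← Matrix.mul_assoc] at h4
    rw [hMM, Matrix.one_mul, Matrix.mul_assoc (M * Sᴴ), hNN', Matrix.mul_one] at h4
    exact h4
  have hcomm : M * T = T * M := by
    calc M * T = M * Sᴴ * S := by rw [hT, Matrix.mul_assoc]
      _ = Sᴴ * N * S := by rw [h3]
      _ = Sᴴ * S * M := by rw [Matrix.mul_assoc, ← h, ← Matrix.mul_assoc]
  have hBps : (M * P * Mᴴ).PosSemidef := hPps.mul_mul_conjTranspose_same M
  have hBsq : (M * P * Mᴴ) ^ 2 = T := by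
    rw [pow_two]
    simp only [← Matrix.mul_assoc]
    rw [Matrix.mul_assoc (M * P) Mᴴ M, hMM', Matrix.mul_one, Matrix.mul_assoc M P P, hPP]
    calc M * T * Mᴴ = T * M * Mᴴ := by rw [hcomm]
      _ = T * (M * Mᴴ) := by rw [Matrix.mul_assoc]
      _ = T := by rw [hMM, Matrix.mul_one]
  have hMPM : M * P * Mᴴ = P := ((CFC.sqrt_eq_iff T (M * P * Mᴴ) hTps.nonneg hBps.nonneg).mpr (by rw [← pow_two]; exact hBsq)).symm
  have hPM : M * P = P * M := by
    calc M * P = M * P * (Mᴴ * M) := by rw [hMM', Matrix.mul_one]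
      _ = (M * P * Mᴴ) * M := by simp only [Matrix.mul_assoc]
      _ = P * M := by rw [hMPM]
  have hdetT : IsUnit T.det := by
    rw [hT, Matrix.det_mul, Matrix.det_conjTranspose]
    exact hS.star.mul hS
  have hPdet : IsUnit P.det := by
    have h5 := congrArg Matrix.det hPP
    rw [Matrix.det_mul] at h5
    exact isUnit_of_mul_isUnit_left (h5 ▸ hdetT)
  have hPinv : P * P⁻¹ = 1 := Matrix.mul_nonsing_inv _ hPdet
  have hPinv' : P⁻¹ * P = 1 := Matrix.nonsing_inv_mul _ hPdet
  have hPMinv : P⁻¹ * M = M * P⁻¹ := by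
    calc P⁻¹ * M = P⁻¹ * M * (P * P⁻¹) := by rw [hPinv, Matrix.mul_one]
      _ = P⁻¹ * (M * P) * P⁻¹ := by simp only [Matrix.mul_assoc]
      _ = P⁻¹ * (P * M) * P⁻¹ := by rw [hPM]
      _ = (P⁻¹ * P) * (M * P⁻¹) := by simp only [Matrix.mul_assoc]
      _ = M * P⁻¹ := by rw [hPinv', Matrix.one_mul]
  refine ⟨S * P⁻¹, ?_, ?_⟩
  · rw [Matrix.mem_unitaryGroup_iff']
    have hstar : star (S * P⁻¹) = P⁻¹ * Sᴴ := by
      rw [Matrix.star_eq_conjTranspose, Matrix.conjTranspose_mul,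
        Matrix.conjTranspose_nonsing_inv, hPH]
    rw [hstar]
    calc P⁻¹ * Sᴴ * (S * P⁻¹) = P⁻¹ * (Sᴴ * S) * P⁻¹ := by simp only [Matrix.mul_assoc]
      _ = P⁻¹ * (P * P) * P⁻¹ := by rw [← hT, ← hPP]
      _ = (P⁻¹ * P) * (P * P⁻¹) := by simp only [Matrix.mul_assoc]
      _ = 1 := by rw [hPinv, hPinv', Matrix.one_mul]
  · calc S * P⁻¹ * M = S * (M * P⁻¹) := by rw [Matrix.mul_assoc, hPMinv]
      _ = (S * M) * P⁻¹ := by rw [Matrix.mul_assoc]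
      _ = N * (S * P⁻¹) := by rw [h, Matrix.mul_assoc]

variable {n : ℕ}

lemma star_mul_self_eq_one_iff (z : ℂ) : star z * z = 1 ↔ ‖z‖ = 1 := by
  have h1 : star z * z = ((‖z‖ ^ 2 : ℝ) : ℂ) := by
    rw [Complex.star_def, ← Complex.normSq_eq_norm_sq, Complex.normSq_eq_conj_mul_self]
  rw [h1]
  constructor
  · intro h
    have h2 : ‖z‖ ^ 2 = 1 := by exact_mod_cast h
    nlinarith [norm_nonneg z]
  · intro h; rw [h]; norm_num

lemma abs_eq_one_of_pow {x : ℝ} {m : ℕ} (hm : m ≠ 0) (hx : 0 ≤ x) (h : x ^ m = 1) : x = 1 := by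
  rcases lt_trichotomy x 1 with h1 | h1 | h1
  · have := pow_lt_one₀ hx h1 hm
    rw [h] at this; exact absurd this (lt_irrefl 1)
  · exact h1
  · have := one_lt_pow₀ h1 hm
    rw [h] at this; exact absurd this (lt_irrefl 1)

/-- Conjugating inside the special unitary group, from a unitary conjugator. -/
lemma isConj_of_unitary_conj (hn : 0 < n) {A B : Matrix.specialUnitaryGroup (Fin n) ℂ}
    {W : Matrix (Fin n) (Fin n) ℂ} (hW : W ∈ Matrix.unitaryGroup (Fin n) ℂ)
    (h : W * A.val = B.val * W) : IsConj A B := by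
  obtain ⟨θ, hθ⟩ := IsAlgClosed.exists_pow_nat_eq (W.det)⁻¹ hn
  have hWdet : star W.det * W.det = 1 := (Matrix.det_of_mem_unitary hW).1
  have habsd : ‖W.det‖ = 1 := (star_mul_self_eq_one_iff _).mp hWdet
  have hθabs : star θ * θ = 1 := by
    rw [star_mul_self_eq_one_iff]
    apply abs_eq_one_of_pow hn.ne' (norm_nonneg θ)
    rw [← norm_pow, hθ, norm_inv, habsd]; norm_num
  set W' : Matrix (Fin n) (Fin n) ℂ := θ • W with hW'
  have hW'unit : W' ∈ Matrix.unitaryGroup (Fin n) ℂ := by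
    rw [Matrix.mem_unitaryGroup_iff']
    have h1 : Wᴴ * W = 1 := by simpa [Matrix.star_eq_conjTranspose] using hW.1
    rw [hW', Matrix.star_eq_conjTranspose, Matrix.conjTranspose_smul,
      Matrix.smul_mul, Matrix.mul_smul, smul_smul, h1]
    rw [hθabs, one_smul]
  have hW'det : W'.det = 1 := by
    rw [hW', Matrix.det_smul, Fintype.card_fin, hθ]
    have : W.det ≠ 0 := by
      intro h0; rw [h0] at habsd; simp at habsd
    field_simp
  have hW'mem : W' ∈ Matrix.specialUnitaryGroup (Fin n) ℂ :=
    (Matrix.mem_specialUnitaryGroup_iff).mpr ⟨hW'unit, hW'det⟩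
  have hW'star : star W' ∈ Matrix.specialUnitaryGroup (Fin n) ℂ := by
    refine (Matrix.mem_specialUnitaryGroup_iff).mpr ⟨Unitary.star_mem hW'unit, ?_⟩
    rw [Matrix.star_eq_conjTranspose, Matrix.det_conjTranspose, hW'det, star_one]
  have hconj : W' * A.val = B.val * W' := by
    rw [hW', Matrix.smul_mul, Matrix.mul_smul, h]
  refine ⟨⟨⟨W', hW'mem⟩, ⟨star W', hW'star⟩, ?_, ?_⟩, ?_⟩
  · exact Subtype.ext hW'unit.2
  · exact Subtype.ext hW'unit.1
  · exact Subtype.ext hconj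

variable {n : ℕ}

/-- One-sided: conjugation sends spectrum into spectrum. -/
lemma spectrum_conj {M N S S' : Matrix (Fin n) (Fin n) ℂ}
    (hSS' : S * S' = 1) (hS'S : S' * S = 1) (h : S * M = N * S) :
    spectrum ℂ N = spectrum ℂ M := by
  have key : ∀ z : ℂ, z • (1 : Matrix (Fin n) (Fin n) ℂ) - N
      = S * (z • (1 : Matrix (Fin n) (Fin n) ℂ) - M) * S' := by
    intro z
    have h1 : S * M * S' = N := by
      rw [h, Matrix.mul_assoc, hSS', Matrix.mul_one]
    rw [Matrix.mul_sub, Matrix.sub_mul, Matrix.mul_smul, Matrix.mul_one, Matrix.smul_mul, hSS',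
      h1]
  ext z
  rw [spectrum.mem_iff, spectrum.mem_iff, Algebra.algebraMap_eq_smul_one, key z, not_iff_not]
  have hS : IsUnit S := (Matrix.isUnit_iff_isUnit_det S).mpr
    (IsUnit.of_mul_eq_one _ (by rw [← Matrix.det_mul, hSS', Matrix.det_one]))
  have hS' : IsUnit S' := (Matrix.isUnit_iff_isUnit_det S').mpr
    (IsUnit.of_mul_eq_one _ (by rw [← Matrix.det_mul, hS'S, Matrix.det_one]))
  constructor
  · intro hu
    have h2 : z • (1 : Matrix (Fin n) (Fin n) ℂ) - M
        = S' * (S * (z • (1 : Matrix (Fin n) (Fin n) ℂ) - M) * S') * S := by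
      simp only [← Matrix.mul_assoc, hS'S, Matrix.one_mul]
      rw [Matrix.mul_assoc, hS'S, Matrix.mul_one]
    rw [h2]
    exact (hS'.mul hu).mul hS
  · intro hu
    exact (hS.mul hu).mul hS'

lemma smul_mem_spectrum_smul {M : Matrix (Fin n) (Fin n) ℂ} {z ω : ℂ} (hω : ω ≠ 0)
    (h : z ∈ spectrum ℂ M) : ω * z ∈ spectrum ℂ (ω • M) := by
  rw [spectrum.mem_iff, Algebra.algebraMap_eq_smul_one] at h ⊢
  intro hu
  apply h
  have key : (ω * z) • (1 : Matrix (Fin n) (Fin n) ℂ) - ω • M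
      = ω • (z • (1 : Matrix (Fin n) (Fin n) ℂ) - M) := by
    rw [smul_sub, smul_smul]
  rw [key] at hu
  rw [Matrix.isUnit_iff_isUnit_det] at hu ⊢
  rw [Matrix.det_smul, Fintype.card_fin] at hu
  rw [isUnit_iff_ne_zero] at hu ⊢
  intro h0; rw [h0, mul_zero] at hu; exact hu rfl

/-- Extract matrix-level data from `IsConj` in the special unitary group. -/
lemma isConj_extract {A B : Matrix.specialUnitaryGroup (Fin n) ℂ} (h : IsConj A B) :
    ∃ S S' : Matrix (Fin n) (Fin n) ℂ, S * S' = 1 ∧ S' * S = 1 ∧ S * A.val = B.val * S := by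
  obtain ⟨u, hu⟩ := h
  refine ⟨(u : Matrix.specialUnitaryGroup (Fin n) ℂ).val,
    ((u⁻¹ : (Matrix.specialUnitaryGroup (Fin n) ℂ)ˣ) : Matrix.specialUnitaryGroup (Fin n) ℂ).val,
    ?_, ?_, ?_⟩
  · exact congrArg Subtype.val u.mul_inv
  · exact congrArg Subtype.val u.inv_mul
  · exact congrArg Subtype.val hu

variable {n : ℕ}

lemma perm_star (σ : Equiv.Perm (Fin n)) :
    star (σ.permMatrix ℂ) = (σ⁻¹).permMatrix ℂ := by
  ext a b
  rw [Matrix.star_eq_conjTranspose, Matrix.conjTranspose_apply]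
  simp only [Equiv.Perm.permMatrix, PEquiv.toMatrix_apply, Equiv.toPEquiv_apply,
    Option.mem_some_iff]
  by_cases h : σ⁻¹ a = b
  · have h2 : σ b = a := by rw [← h]; simp
    simp [h, h2]
  · have h2 : ¬ (σ b = a) := fun hc => h (by rw [← hc]; simp)
    simp [h, h2]; exact h

lemma perm_unitary (σ : Equiv.Perm (Fin n)) :
    σ.permMatrix ℂ ∈ Matrix.unitaryGroup (Fin n) ℂ := by
  rw [Matrix.mem_unitaryGroup_iff', perm_star]
  show (σ⁻¹).toPEquiv.toMatrix * (σ.toPEquiv.toMatrix) = 1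
  rw [PEquiv.toMatrix_toPEquiv_mul]
  ext a b
  simp only [Matrix.submatrix_apply, id_eq, PEquiv.toMatrix_apply, Equiv.toPEquiv_apply,
    Option.mem_some_iff, Matrix.one_apply]
  by_cases h : a = b
  · simp [h]
  · have h3 : ¬ (σ (σ⁻¹ a) = b) := by simpa using h
    simp [h, h3]

lemma center_scalar (hn : 0 < n) (z : Matrix.specialUnitaryGroup (Fin n) ℂ)
    (hz : z ∈ Submonoid.center (Matrix.specialUnitaryGroup (Fin n) ℂ)) :
    ∃ ω : ℂ, ω ^ n = 1 ∧ z.val = ω • (1 : Matrix (Fin n) (Fin n) ℂ) := by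
  have hcomm : ∀ g : Matrix (Fin n) (Fin n) ℂ, g ∈ Matrix.specialUnitaryGroup (Fin n) ℂ →
      g * z.val = z.val * g := by
    intro g hg
    exact congrArg Subtype.val ((Submonoid.mem_center_iff.mp hz) ⟨g, hg⟩)
  have hoff : ∀ i j : Fin n, i ≠ j → z.val i j = 0 := by
    intro i j hij
    set dv : Fin n → ℂ := fun k => if k = i then Complex.I else if k = j then -Complex.I else 1
      with hdv
    have hmem : Matrix.diagonal dv ∈ Matrix.specialUnitaryGroup (Fin n) ℂ := by
      refine (Matrix.mem_specialUnitaryGroup_iff).mpr ⟨?_, ?_⟩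
      · rw [Matrix.mem_unitaryGroup_iff']
        rw [Matrix.star_eq_conjTranspose, Matrix.diagonal_conjTranspose,
          Matrix.diagonal_mul_diagonal]
        ext a b
        rw [Matrix.diagonal_apply, Matrix.one_apply]
        by_cases hab : a = b
        · subst hab
          simp only [if_pos rfl]
          by_cases h1 : a = i
          · simp [hdv, h1, Complex.conj_I]
          · by_cases h2 : a = j <;> simp [hdv, h1, h2, Ne.symm hij, Complex.conj_I]
        · simp [hab]
      · rw [Matrix.det_diagonal]
        rw [show Finset.univ.prod dv = ({i, j} : Finset (Fin n)).prod dv from ?_]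
        · rw [Finset.prod_pair hij]
          simp [hdv, hij, (Ne.symm hij), Complex.I_mul_I]
        · symm
          apply Finset.prod_subset (Finset.subset_univ _)
          intro x _ hx
          simp only [Finset.mem_insert, Finset.mem_singleton, not_or] at hx
          simp [hdv, hx.1, hx.2]
    have hc := hcomm _ hmem
    have h1 := congrFun (congrFun hc i) j
    rw [Matrix.diagonal_mul, Matrix.mul_diagonal] at h1
    simp only [hdv] at h1
    rw [if_pos trivial, if_neg (Ne.symm hij), if_pos trivial] at h1
    have h2 : (2 * Complex.I) * z.val i j = 0 := by linear_combination h1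
    rcases mul_eq_zero.mp h2 with h3 | h3
    · exact absurd h3 (by simp [Complex.I_ne_zero])
    · exact h3
  have hdiag : ∀ i j : Fin n, z.val i i = z.val j j := by
    intro i j
    by_cases hij : i = j
    · rw [hij]
    · set σ : Equiv.Perm (Fin n) := Equiv.swap i j with hσ
      set θ : ℂ := Complex.exp (Real.pi * Complex.I / n) with hθ
      have hn0 : (n : ℂ) ≠ 0 := Nat.cast_ne_zero.mpr hn.ne'
      have hθn : θ ^ n = -1 := by
        rw [hθ, ← Complex.exp_nat_mul]
        rw [show (n : ℂ) * (Real.pi * Complex.I / n) = Real.pi * Complex.I from by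
          field_simp]
        exact Complex.exp_pi_mul_I
      have hθ0 : θ ≠ 0 := Complex.exp_ne_zero _
      have hθabs : star θ * θ = 1 := by
        have hstar : star θ = Complex.exp (-(Real.pi * Complex.I / n)) := by
          rw [hθ, Complex.star_def, ← Complex.exp_conj]
          congr 1
          simp [map_div₀, Complex.conj_I]
          ring
        rw [hstar, hθ, ← Complex.exp_add]
        simp
      have hmem : θ • (σ.permMatrix ℂ) ∈ Matrix.specialUnitaryGroup (Fin n) ℂ := by
        refine (Matrix.mem_specialUnitaryGroup_iff).mpr ⟨?_, ?_⟩
        · rw [Matrix.mem_unitaryGroup_iff']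
          rw [star_smul, Matrix.smul_mul, Matrix.mul_smul, smul_smul, hθabs]
          have h4 := perm_unitary (n := n) σ
          rw [Matrix.mem_unitaryGroup_iff'] at h4
          rw [h4, one_smul]
        · rw [Matrix.det_smul, Fintype.card_fin, Matrix.det_permutation, hσ,
            Equiv.Perm.sign_swap hij, hθn]
          simp
      have hc := hcomm _ hmem
      rw [Matrix.smul_mul, Matrix.mul_smul] at hc
      have hc2 : σ.permMatrix ℂ * z.val = z.val * σ.permMatrix ℂ :=
        smul_right_injective _ hθ0 hc
      have hc3 := hc2.symm
      rw [show (σ.permMatrix ℂ : Matrix (Fin n) (Fin n) ℂ) = σ.toPEquiv.toMatrix from rfl] at hc3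
      rw [PEquiv.mul_toMatrix_toPEquiv, PEquiv.toMatrix_toPEquiv_mul] at hc3
      have h5 := congrFun (congrFun hc3 j) i
      simp only [Matrix.submatrix_apply, id_eq] at h5
      rw [hσ, Equiv.symm_swap, Equiv.swap_apply_left, Equiv.swap_apply_right] at h5
      exact h5.symm
  have hsc : z.val = (z.val ⟨0, hn⟩ ⟨0, hn⟩) • (1 : Matrix (Fin n) (Fin n) ℂ) := by
    ext a b
    by_cases h : a = b
    · subst h
      rw [hdiag a ⟨0, hn⟩]
      simp [Matrix.one_apply]
    · rw [hoff a b h]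
      simp [Matrix.one_apply, h]
  refine ⟨z.val ⟨0, hn⟩ ⟨0, hn⟩, ?_, hsc⟩
  have hdet : z.val.det = 1 := (Matrix.mem_specialUnitaryGroup_iff.mp z.property).2
  rw [hsc, Matrix.det_smul, Fintype.card_fin, Matrix.det_one, mul_one] at hdet
  exact hdet
lemma isConj_of_good (hn : 0 < n) {c' : ℂ} (hc' : c' ≠ 0)
    {A B : Matrix.specialUnitaryGroup (Fin n) ℂ}
    (hGA : ∀ z : ℂ, z ^ n = c' → z ∈ spectrum ℂ A.val)
    (hGB : ∀ z : ℂ, z ^ n = c' → z ∈ spectrum ℂ B.val) : IsConj A B := by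
  obtain ⟨d, hdinj, hd⟩ := exists_root_family hn hc'
  obtain ⟨P, hPdet, hP⟩ := diag_lemma hn A.val d hdinj (fun i => hGA _ (hd i))
  obtain ⟨Q, hQdet, hQ⟩ := diag_lemma hn B.val d hdinj (fun i => hGB _ (hd i))
  have hPinv : P * P⁻¹ = 1 := Matrix.mul_nonsing_inv _ hPdet
  have hPinv' : P⁻¹ * P = 1 := Matrix.nonsing_inv_mul _ hPdet
  set S : Matrix (Fin n) (Fin n) ℂ := Q * P⁻¹ with hS
  have hSdet : IsUnit S.det := by
    rw [hS, Matrix.det_mul, Matrix.det_nonsing_inv]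
    rw [Ring.inverse_eq_inv]
    exact hQdet.mul hPdet.inv
  have hSA : S * A.val = B.val * S := by
    have h1 : P⁻¹ * A.val = Matrix.diagonal d * P⁻¹ := by
      calc P⁻¹ * A.val = P⁻¹ * A.val * (P * P⁻¹) := by rw [hPinv, Matrix.mul_one]
        _ = P⁻¹ * (A.val * P) * P⁻¹ := by simp only [Matrix.mul_assoc]
        _ = P⁻¹ * (P * Matrix.diagonal d) * P⁻¹ := by rw [hP]
        _ = (P⁻¹ * P) * (Matrix.diagonal d * P⁻¹) := by simp only [Matrix.mul_assoc]
        _ = Matrix.diagonal d * P⁻¹ := by rw [hPinv', Matrix.one_mul]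
    calc S * A.val = Q * (P⁻¹ * A.val) := by rw [hS, Matrix.mul_assoc]
      _ = Q * Matrix.diagonal d * P⁻¹ := by rw [h1, Matrix.mul_assoc]
      _ = B.val * Q * P⁻¹ := by rw [hQ]
      _ = B.val * S := by rw [hS, Matrix.mul_assoc]
  obtain ⟨W, hWmem, hW⟩ := polar_conj (Matrix.mem_specialUnitaryGroup_iff.mp A.property).1
    (Matrix.mem_specialUnitaryGroup_iff.mp B.property).1 hSdet hSA
  exact isConj_of_unitary_conj hn hWmem hW

lemma good_smul {M : Matrix (Fin n) (Fin n) ℂ} {c' ω : ℂ} (hω : ω ≠ 0) (hωn : ω ^ n = 1)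
    (h : ∀ z : ℂ, z ^ n = c' → z ∈ spectrum ℂ M) :
    ∀ z : ℂ, z ^ n = c' → z ∈ spectrum ℂ (ω • M) := by
  intro z hz
  have h1 : (ω⁻¹ * z) ^ n = c' := by
    rw [mul_pow, inv_pow, hωn, inv_one, one_mul, hz]
  have h2 := smul_mem_spectrum_smul (M := M) hω (h _ h1)
  rwa [← mul_assoc, mul_inv_cancel₀ hω, one_mul] at h2

lemma good_of_isConj {c' : ℂ} {A B : Matrix.specialUnitaryGroup (Fin n) ℂ}
    (hGA : ∀ z : ℂ, z ^ n = c' → z ∈ spectrum ℂ A.val) (h : IsConj A B) :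
    ∀ z : ℂ, z ^ n = c' → z ∈ spectrum ℂ B.val := by
  obtain ⟨S, S', h1, h2, h3⟩ := isConj_extract h
  have := spectrum_conj h1 h2 h3
  intro z hz
  rw [this]
  exact hGA z hz

lemma scalar_mem_SU (hn : 0 < n) {ω : ℂ} (hωn : ω ^ n = 1) :
    ω • (1 : Matrix (Fin n) (Fin n) ℂ) ∈ Matrix.specialUnitaryGroup (Fin n) ℂ := by
  have hstar : star ω * ω = 1 := by
    rw [star_mul_self_eq_one_iff]
    apply abs_eq_one_of_pow hn.ne' (norm_nonneg ω)
    rw [← norm_pow, hωn, norm_one]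
  refine (Matrix.mem_specialUnitaryGroup_iff).mpr ⟨?_, ?_⟩
  · rw [Matrix.mem_unitaryGroup_iff', star_smul, star_one, Matrix.smul_mul, Matrix.mul_smul,
      smul_smul, Matrix.one_mul, hstar, one_smul]
  · rw [Matrix.det_smul, Fintype.card_fin, Matrix.det_one, mul_one, hωn]

lemma scalar_central (hn : 0 < n) {ω : ℂ} (hωn : ω ^ n = 1) :
    (⟨ω • 1, scalar_mem_SU hn hωn⟩ : Matrix.specialUnitaryGroup (Fin n) ℂ)
      ∈ Submonoid.center (Matrix.specialUnitaryGroup (Fin n) ℂ) := by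
  rw [Submonoid.mem_center_iff]
  intro g
  apply Subtype.ext
  show g.val * (ω • 1) = (ω • 1) * g.val
  rw [Matrix.mul_smul, Matrix.smul_mul, Matrix.mul_one, Matrix.one_mul]

end Stmt10

theorem stmt_10 (n : ℕ) (hn : 0 < n)
    (A : Matrix.specialUnitaryGroup (Fin n) ℂ)
    (hA : ∀ z : ℂ, z ^ n = (-1 : ℂ) ^ (n + 1) →
      z ∈ spectrum ℂ (A : Matrix (Fin n) (Fin n) ℂ)) :
    (∀ z ∈ Submonoid.center (Matrix.specialUnitaryGroup (Fin n) ℂ),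
      ∀ B : Matrix.specialUnitaryGroup (Fin n) ℂ, IsConj A B ↔ IsConj A (z * B)) ∧
    (∀ A' : Matrix.specialUnitaryGroup (Fin n) ℂ,
      (∀ z ∈ Submonoid.center (Matrix.specialUnitaryGroup (Fin n) ℂ),
        ∀ B : Matrix.specialUnitaryGroup (Fin n) ℂ, IsConj A' B ↔ IsConj A' (z * B)) →
      IsConj A A') := by
  classical
  have hc0 : ((-1 : ℂ) ^ (n + 1)) ≠ 0 := pow_ne_zero _ (by norm_num)
  have toConj : ∀ B : Matrix.specialUnitaryGroup (Fin n) ℂ,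
      (∀ z : ℂ, z ^ n = (-1 : ℂ) ^ (n + 1) → z ∈ spectrum ℂ B.val) → IsConj A B :=
    fun B hB => Stmt10.isConj_of_good hn hc0 hA hB
  have ofConj : ∀ B : Matrix.specialUnitaryGroup (Fin n) ℂ, IsConj A B →
      (∀ z : ℂ, z ^ n = (-1 : ℂ) ^ (n + 1) → z ∈ spectrum ℂ B.val) :=
    fun B h => Stmt10.good_of_isConj hA h
  constructor
  · intro z hz B
    obtain ⟨ω, hωn, hzval⟩ := Stmt10.center_scalar hn z hz
    have hω0 : ω ≠ 0 := by
      intro h0; rw [h0, zero_pow hn.ne'] at hωn; exact zero_ne_one hωn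
    have hval : (z * B).val = ω • B.val := by
      show z.val * B.val = ω • B.val
      rw [hzval, Matrix.smul_mul, Matrix.one_mul]
    constructor
    · intro hAB
      apply toConj
      intro ζ hζ
      rw [hval]
      exact Stmt10.good_smul hω0 hωn (ofConj B hAB) ζ hζ
    · intro hAzB
      apply toConj
      have hg := ofConj _ hAzB
      rw [hval] at hg
      have hg2 := Stmt10.good_smul (inv_ne_zero hω0)
        (by rw [inv_pow, hωn, inv_one]) hg
      intro ζ hζ
      have h6 := hg2 ζ hζ
      rwa [inv_smul_smul₀ hω0] at h6
  · intro A' H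
    have hcls : ∀ ω : ℂ, ω ^ n = 1 → spectrum ℂ (ω • A'.val) = spectrum ℂ A'.val := by
      intro ω hωn
      have hcen := Stmt10.scalar_central hn hωn
      have h := (H _ hcen A').mp (IsConj.refl A')
      obtain ⟨S, S', h1, h2, h3⟩ := Stmt10.isConj_extract h
      have hval : ((⟨ω • 1, Stmt10.scalar_mem_SU hn hωn⟩ :
          Matrix.specialUnitaryGroup (Fin n) ℂ) * A').val = ω • A'.val := by
        show (ω • (1 : Matrix (Fin n) (Fin n) ℂ)) * A'.val = ω • A'.val
        rw [Matrix.smul_mul, Matrix.one_mul]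
      rw [hval] at h3
      exact Stmt10.spectrum_conj h1 h2 h3
    have hdetA' : A'.val.det = 1 := (Matrix.mem_specialUnitaryGroup_iff.mp A'.property).2
    have hmonic := A'.val.charpoly_monic
    have hdeg : A'.val.charpoly.natDegree = n := A'.val.charpoly_natDegree_eq_dim.trans (by simp)
    obtain ⟨lam, hlam⟩ := IsAlgClosed.exists_root A'.val.charpoly (by
      rw [Polynomial.degree_eq_natDegree hmonic.ne_zero, hdeg]
      exact_mod_cast hn.ne')
    have hlamspec : lam ∈ spectrum ℂ A'.val := (Stmt10.mem_spectrum_iff_eval _ _).mpr hlam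
    have hlam0 : lam ≠ 0 := by
      rintro rfl
      rw [spectrum.mem_iff] at hlamspec
      apply hlamspec
      rw [map_zero, zero_sub]
      exact ((Matrix.isUnit_iff_isUnit_det _).mpr (by rw [hdetA']; exact isUnit_one)).neg
    have hGood' : ∀ ζ : ℂ, ζ ^ n = lam ^ n → ζ ∈ spectrum ℂ A'.val := by
      intro ζ hζ
      have hζ0 : ζ ≠ 0 := by
        rintro rfl; rw [zero_pow hn.ne'] at hζ; exact (pow_ne_zero n hlam0) hζ.symm
      have hω0 : ζ * lam⁻¹ ≠ 0 := mul_ne_zero hζ0 (inv_ne_zero hlam0)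
      have hωn : (ζ * lam⁻¹) ^ n = 1 := by
        rw [mul_pow, inv_pow, hζ, mul_inv_cancel₀ (pow_ne_zero n hlam0)]
      have h5 := Stmt10.smul_mem_spectrum_smul hω0 hlamspec
      rw [hcls _ hωn] at h5
      rwa [show ζ * lam⁻¹ * lam = ζ from by field_simp] at h5
    have hcp := Stmt10.charpoly_eq hn (pow_ne_zero n hlam0) A'.val hGood'
    have hdetc := Matrix.det_eq_sign_charpoly_coeff A'.val
    rw [hdetA', hcp, Fintype.card_fin] at hdetc
    have hcoeff : ((Polynomial.X : Polynomial ℂ) ^ n - Polynomial.C (lam ^ n)).coeff 0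
        = -(lam ^ n) := by
      rw [Polynomial.coeff_sub, Polynomial.coeff_X_pow, Polynomial.coeff_C,
        if_neg (by omega : ¬(0 = n)), if_pos rfl, zero_sub]
    rw [hcoeff] at hdetc
    have hfin : lam ^ n = (-1 : ℂ) ^ (n + 1) := by
      rw [pow_succ]
      have h2 : ((-1 : ℂ) ^ n) * ((-1 : ℂ) ^ n) = 1 := by
        rw [← pow_add]
        exact Even.neg_one_pow ⟨n, rfl⟩
      linear_combination ((-1 : ℂ) ^ n) * hdetc + (-(lam ^ n)) * h2
    apply toConj
    intro ζ hζ
    exact hGood' ζ (by rw [hζ, ← hfin])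
end

section
/- Let A ∈ SU(n) have eigenvalues equal to the n distinct n-th roots of (−1)^{n+1}, and let k be a positive integer. Then A^k is a scalar matrix (i.e., A^k ∈ Z(SU(n))) if and only if n divides k. -/
open Polynomial

lemma charpoly_isRoot_of_mem_spectrum {n : ℕ} (M : Matrix (Fin n) (Fin n) ℂ) {z : ℂ}
    (h : z ∈ spectrum ℂ M) : M.charpoly.IsRoot z := by
  rw [spectrum.mem_iff] at h
  contrapose! h
  rw [IsRoot, Matrix.charpoly, eval_det, Matrix.matPolyEquiv_charmatrix,
    eval_sub, eval_X, eval_C] at h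
  rw [Matrix.isUnit_iff_isUnit_det, isUnit_iff_ne_zero]
  exact h



/- STATEMENT 11: Let A ∈ SU(n) have eigenvalues the n distinct n-th roots of (−1)^{n+1}
(i.e. every solution of z^n = (−1)^{n+1} lies in the spectrum of A), and let k > 0.
Then A^k is a scalar matrix (A^k ∈ Z(SU(n))) if and only if n divides k. -/
theorem stmt_11 (n k : ℕ) (hn : 0 < n) (hk : 0 < k)
    (A : Matrix.specialUnitaryGroup (Fin n) ℂ)
    (hA : ∀ z : ℂ, z ^ n = (-1 : ℂ) ^ (n + 1) →
      z ∈ spectrum ℂ (A : Matrix (Fin n) (Fin n) ℂ)) :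
    (∃ c : ℂ, (A : Matrix (Fin n) (Fin n) ℂ) ^ k = c • (1 : Matrix (Fin n) (Fin n) ℂ)) ↔
      n ∣ k := by
  haveI : Nonempty (Fin n) := ⟨⟨0, hn⟩⟩
  set c : ℂ := (-1 : ℂ) ^ (n + 1) with hc_def
  have hc : c ≠ 0 := pow_ne_zero _ (by norm_num)
  set M : Matrix (Fin n) (Fin n) ℂ := (A : Matrix (Fin n) (Fin n) ℂ) with hM
  set p : ℂ[X] := X ^ n - C c with hp_def
  have hpm : p.Monic := monic_X_pow_sub_C c hn.ne'
  have hpd : p.natDegree = n := by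
    rw [hp_def, natDegree_X_pow_sub_C]
  have hqm : M.charpoly.Monic := Matrix.charpoly_monic M
  have hqd : M.charpoly.natDegree = n := by
    simpa using Matrix.charpoly_natDegree_eq_dim M
  have hroot : ∀ z : ℂ, p.IsRoot z ↔ z ^ n = c := by
    intro z
    simp [hp_def, IsRoot, sub_eq_zero]
  have hsep : p.Separable := separable_X_pow_sub_C c (by exact_mod_cast hn.ne') hc
  have hple : p.roots ≤ M.charpoly.roots := by
    rw [Multiset.le_iff_count]
    intro z
    rcases Nat.eq_zero_or_pos (p.roots.count z) with h0 | h0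
    · simp [h0]
    · have hz : p.IsRoot z := isRoot_of_mem_roots (Multiset.count_pos.mp h0)
      have hz' : M.charpoly.IsRoot z :=
        charpoly_isRoot_of_mem_spectrum M (hA z ((hroot z).mp hz))
      have h1 : p.roots.count z ≤ 1 :=
        Multiset.nodup_iff_count_le_one.mp (nodup_roots hsep) z
      have h2 : 1 ≤ M.charpoly.roots.count z := by
        rw [count_roots]
        exact (rootMultiplicity_pos hqm.ne_zero).mpr hz'
      omega
  have hpc : Multiset.card p.roots = n := by
    have h := splits_iff_card_roots.mp (IsAlgClosed.splits p)
    rwa [hpd] at h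
  have hqc : Multiset.card M.charpoly.roots = n := by
    have h := splits_iff_card_roots.mp (IsAlgClosed.splits M.charpoly)
    rwa [hqd] at h
  have hpq : p = M.charpoly := by
    have hre : p.roots = M.charpoly.roots :=
      Multiset.eq_of_le_of_card_le hple (by rw [hpc, hqc])
    rw [(IsAlgClosed.splits p).eq_prod_roots_of_monic hpm,
      (IsAlgClosed.splits M.charpoly).eq_prod_roots_of_monic hqm, hre]
  have hAn : M ^ n = c • (1 : Matrix (Fin n) (Fin n) ℂ) := by
    have h := Matrix.aeval_self_charpoly M
    rw [← hpq, hp_def, map_sub, aeval_X_pow, aeval_C, sub_eq_zero] at h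
    rw [h, Algebra.algebraMap_eq_smul_one]
  constructor
  · rintro ⟨d, hd⟩
    have key : ∀ z : ℂ, z ^ n = c → z ^ k = d := by
      intro z hz
      have h1 : z ^ k ∈ spectrum ℂ (M ^ k) :=
        spectrum.pow_image_subset M k ⟨z, hA z hz, rfl⟩
      rw [hd, ← Algebra.algebraMap_eq_smul_one, spectrum.scalar_eq] at h1
      simpa using h1
    obtain ⟨w, hw⟩ := IsAlgClosed.exists_pow_nat_eq c hn
    have hwne : w ≠ 0 := by
      rintro rfl
      exact hc (by rw [← hw, zero_pow hn.ne'])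
    have hζ := Complex.isPrimitiveRoot_exp n hn.ne'
    set ζ := Complex.exp (2 * Real.pi * Complex.I / n)
    have hzw : (ζ * w) ^ n = c := by rw [mul_pow, hζ.pow_eq_one, one_mul, hw]
    have h1 := key w hw
    have h2 := key (ζ * w) hzw
    rw [mul_pow, ← h1] at h2
    have hdne : w ^ k ≠ 0 := pow_ne_zero _ hwne
    have hζ1 : ζ ^ k = 1 := by
      have h3 : ζ ^ k * w ^ k = 1 * w ^ k := by rw [one_mul, h2]
      exact mul_right_cancel₀ hdne h3
    exact hζ.dvd_of_pow_eq_one k hζ1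
  · rintro ⟨m, rfl⟩
    refine ⟨c ^ m, ?_⟩
    rw [pow_mul, hAn, _root_.smul_pow, one_pow]
end
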